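/- Let G : [0,∞) → (0,∞) be continuous with t^{n+r} G(t) decreasing on (1,∞) and tending to 0 at ∞, and let μ be a positive Radon measure supported in B(x₀,1) with μ(B(x₀,ε)) = o(ε^{n+r}) and ∫ |x−x₀|^{−n−r} dμ < ∞. Then lim_{ε→0⁺} ε^{−n−r} ∫_{ℝⁿ} G(|x−x₀|/ε) dμ(x) = 0. -/

import Mathlib

open MeasureTheory Metric Filter Topology

theorem kernel_integral_tendsto_zero (n r : ℕ) (G : ℝ → ℝ) (hGc : Continuous G)
    (hGpos : ∀ t ≥ (0:ℝ), 0 < G t)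
    (hGdec : AntitoneOn (fun t => t ^ (n + r) * G t) (Set.Ioi 1))
    (hGlim : Tendsto (fun t => t ^ (n + r) * G t) atTop (𝓝 0))
    (μ : Measure (EuclideanSpace ℝ (Fin n))) [IsFiniteMeasure μ]
    (x₀ : EuclideanSpace ℝ (Fin n))
    (hsupp : μ (closedBall x₀ 1)ᶜ = 0) (hpt : μ {x₀} = 0)
    (hsmall : Tendsto (fun ε : ℝ => (μ (ball x₀ ε)).toReal / ε ^ (n + r)) (𝓝[>] 0) (𝓝 0))
    (hinteg : Integrable (fun x => ‖x - x₀‖ ^ (-((n : ℝ) + r))) μ) :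
    Tendsto (fun ε : ℝ => ε ^ (-((n : ℝ) + r)) * ∫ x, G (‖x - x₀‖ / ε) ∂μ)
      (𝓝[>] 0) (𝓝 0) := by
  set q : ℝ := (n : ℝ) + r with hq
  set p : ℕ := n + r with hp
  have hqp : ∀ x : ℝ, 0 < x → x ^ (-q) = (x ^ p)⁻¹ := by
    intro x hx
    rw [Real.rpow_neg hx.le, ← Real.rpow_natCast x p]
    congr 2
    push_cast [hp]; ring
  have hC0 : 0 ≤ ∫ x, ‖x - x₀‖ ^ (-q) ∂μ :=
    integral_nonneg fun x => Real.rpow_nonneg (norm_nonneg _) _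
  set C := ∫ x, ‖x - x₀‖ ^ (-q) ∂μ with hCdef
  -- integrability of the kernel
  have hint : ∀ ε : ℝ, 0 < ε → Integrable (fun x => G (‖x - x₀‖ / ε)) μ := by
    intro ε hε
    have hcont : Continuous fun x : EuclideanSpace ℝ (Fin n) => G (‖x - x₀‖ / ε) :=
      hGc.comp ((continuous_id.sub continuous_const).norm.div_const ε)
    obtain ⟨z, hz, hzmax⟩ := (isCompact_closedBall x₀ 1).exists_isMaxOn
      ⟨x₀, mem_closedBall_self zero_le_one⟩ hcont.continuousOn
    have hae : ∀ᵐ x ∂μ, x ∈ closedBall x₀ 1 := by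
      rw [ae_iff]
      convert hsupp using 2
      rfl
    refine Integrable.mono' (integrable_const (G (‖z - x₀‖ / ε)))
      hcont.aestronglyMeasurable ?_
    filter_upwards [hae] with x hx
    rw [Real.norm_eq_abs, abs_of_pos (hGpos _ (div_nonneg (norm_nonneg _) hε.le))]
    exact hzmax hx
  rw [Metric.tendsto_nhds]
  intro δ hδ
  -- choose A
  have h2 : 0 < δ / (2 * (C + 1)) := by positivity
  obtain ⟨A, hA2, hAlt⟩ : ∃ A : ℝ, 2 ≤ A ∧ A ^ p * G A < δ / (2 * (C + 1)) := by
    have h1 := hGlim.eventually (gt_mem_nhds h2)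
    exact ((eventually_ge_atTop (2:ℝ)).and h1).exists.imp fun A h => ⟨h.1, h.2⟩
  have hA1 : (1:ℝ) < A := by linarith
  have hA0 : (0:ℝ) < A := by linarith
  set gA := A ^ p * G A with hgAdef
  have hgA0 : 0 ≤ gA := mul_nonneg (pow_nonneg hA0.le _) (hGpos A hA0.le).le
  -- sup of G on [0, A]
  obtain ⟨t₀, ht₀, hM⟩ := isCompact_Icc.exists_isMaxOn
    (Set.nonempty_Icc.2 hA0.le) hGc.continuousOn
  set M := G t₀ with hMdef
  have hM0 : 0 < M := hGpos t₀ ht₀.1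
  -- near part tendsto 0
  have hcomp : Tendsto (fun ε : ℝ => A * ε) (𝓝[>] 0) (𝓝[>] 0) := by
    apply tendsto_nhdsWithin_of_tendsto_nhds_of_eventually_within
    · have : Tendsto (fun ε : ℝ => A * ε) (𝓝 0) (𝓝 (A * 0)) :=
        (continuous_const.mul continuous_id).tendsto 0
      simpa using this.mono_left nhdsWithin_le_nhds
    · filter_upwards [self_mem_nhdsWithin] with ε (hε : ε ∈ Set.Ioi 0)
      exact mul_pos hA0 hε
  have hnear : Tendsto (fun ε : ℝ => (μ (ball x₀ (A * ε))).toReal / (A * ε) ^ p)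
      (𝓝[>] 0) (𝓝 0) := hsmall.comp hcomp
  have hMA : 0 < δ / (2 * (M * A ^ p)) := by positivity
  filter_upwards [hnear.eventually (gt_mem_nhds hMA), self_mem_nhdsWithin]
    with ε hεnear (hε : ε ∈ Set.Ioi 0)
  have hε0 : (0:ℝ) < ε := hε
  have hεp : (0:ℝ) < ε ^ p := pow_pos hε0 p
  have hfint := hint ε hε0
  have hfpos : ∀ x, 0 ≤ G (‖x - x₀‖ / ε) :=
    fun x => (hGpos _ (div_nonneg (norm_nonneg _) hε0.le)).le
  set s := ball x₀ (A * ε) with hsdef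
  have hsplit : (∫ x in s, G (‖x - x₀‖ / ε) ∂μ) + (∫ x in sᶜ, G (‖x - x₀‖ / ε) ∂μ)
      = ∫ x, G (‖x - x₀‖ / ε) ∂μ := integral_add_compl measurableSet_ball hfint
  -- near bound
  have hb1 : (∫ x in s, G (‖x - x₀‖ / ε) ∂μ) ≤ M * (μ s).toReal := by
    calc (∫ x in s, G (‖x - x₀‖ / ε) ∂μ) ≤ ∫ _x in s, M ∂μ := by
          refine setIntegral_mono_on hfint.integrableOn (integrableOn_const ?_)
            measurableSet_ball ?_
          · exact measure_ne_top μ s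
          · intro x hx
            refine hM ⟨div_nonneg (norm_nonneg _) hε0.le, ?_⟩
            rw [div_le_iff₀ hε0]
            exact le_of_lt (mem_ball_iff_norm.1 hx)
      _ = M * (μ s).toReal := by rw [setIntegral_const, smul_eq_mul, mul_comm]; rfl
  -- far bound
  have hb2 : (∫ x in sᶜ, G (‖x - x₀‖ / ε) ∂μ) ≤ gA * ε ^ p * C := by
    have hmono : ∀ x ∈ sᶜ, G (‖x - x₀‖ / ε) ≤ gA * ε ^ p * ‖x - x₀‖ ^ (-q) := by
      intro x hx
      have hxs : A * ε ≤ ‖x - x₀‖ := by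
        have := hx
        simp only [hsdef, Set.mem_compl_iff, mem_ball_iff_norm, not_lt] at this
        exact this
      have hs0 : (0:ℝ) < ‖x - x₀‖ := lt_of_lt_of_le (mul_pos hA0 hε0) hxs
      set t := ‖x - x₀‖ / ε with htdef
      have hAt : A ≤ t := (le_div_iff₀ hε0).2 hxs
      have ht1 : 1 < t := lt_of_lt_of_le hA1 hAt
      have hdec := hGdec (Set.mem_Ioi.2 hA1) (Set.mem_Ioi.2 ht1) hAt
      -- hdec : t ^ p * G t ≤ A ^ p * G A = gA
      have htp : (0:ℝ) < t ^ p := pow_pos (lt_trans one_pos ht1) p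
      have hGt : G t ≤ gA / t ^ p := by
        rw [le_div_iff₀ htp]
        calc G t * t ^ p = t ^ p * G t := by ring
          _ ≤ gA := hdec
      refine hGt.trans (le_of_eq ?_)
      rw [hqp _ hs0]
      have htpow : t ^ p = ‖x - x₀‖ ^ p / ε ^ p := div_pow _ _ p
      rw [htpow]
      field_simp
    calc (∫ x in sᶜ, G (‖x - x₀‖ / ε) ∂μ)
        ≤ ∫ x in sᶜ, gA * ε ^ p * ‖x - x₀‖ ^ (-q) ∂μ :=
          setIntegral_mono_on hfint.integrableOn
            ((hinteg.const_mul (gA * ε ^ p)).integrableOn)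
            measurableSet_ball.compl hmono
      _ ≤ ∫ x, gA * ε ^ p * ‖x - x₀‖ ^ (-q) ∂μ := by
          refine setIntegral_le_integral (hinteg.const_mul (gA * ε ^ p)) ?_
          filter_upwards with x
          exact mul_nonneg (mul_nonneg hgA0 hεp.le) (Real.rpow_nonneg (norm_nonneg _) _)
      _ = gA * ε ^ p * C := by rw [integral_const_mul]
  -- combine
  have hεq : ε ^ (-q) = (ε ^ p)⁻¹ := hqp ε hε0
  have hF : ε ^ (-q) * ∫ x, G (‖x - x₀‖ / ε) ∂μ
      ≤ M * A ^ p * ((μ s).toReal / (A * ε) ^ p) + gA * C := by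
    rw [hεq, ← hsplit, mul_add]
    have e1 : (ε ^ p)⁻¹ * ∫ x in s, G (‖x - x₀‖ / ε) ∂μ
        ≤ M * A ^ p * ((μ s).toReal / (A * ε) ^ p) := by
      refine (mul_le_mul_of_nonneg_left hb1 (inv_nonneg.2 hεp.le)).trans (le_of_eq ?_)
      rw [mul_pow]
      field_simp
    have e2 : (ε ^ p)⁻¹ * ∫ x in sᶜ, G (‖x - x₀‖ / ε) ∂μ ≤ gA * C := by
      refine (mul_le_mul_of_nonneg_left hb2 (inv_nonneg.2 hεp.le)).trans (le_of_eq ?_)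
      field_simp
    exact add_le_add e1 e2
  have hFnn : 0 ≤ ε ^ (-q) * ∫ x, G (‖x - x₀‖ / ε) ∂μ :=
    mul_nonneg (Real.rpow_nonneg hε0.le _) (integral_nonneg hfpos)
  rw [Real.dist_eq, sub_zero, abs_of_nonneg hFnn]
  have h1 : M * A ^ p * ((μ s).toReal / (A * ε) ^ p) < δ / 2 := by
    have := hεnear
    calc M * A ^ p * ((μ s).toReal / (A * ε) ^ p)
        < M * A ^ p * (δ / (2 * (M * A ^ p))) :=
          mul_lt_mul_of_pos_left hεnear (by positivity)
      _ = δ / 2 := by field_simp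
  have h2' : gA * C < δ / 2 := by
    calc gA * C ≤ gA * (C + 1) := by nlinarith
      _ < δ / (2 * (C + 1)) * (C + 1) := by
          have hC1 : (0:ℝ) < C + 1 := by linarith
          exact mul_lt_mul_of_pos_right hAlt hC1
      _ = δ / 2 := by field_simp
  linarith
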